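/- Let B be a boolean sublattice of a finite distributive lattice L with 0_B = 0_L and 1_B = 1_L. Then the length (height) of L equals the sum over all atoms a of B of the height h(a) of a in L. -/

import Mathlib

open Order Finset

open scoped Classical

section Aux

variable {L : Type*} [DistribLattice L] [BoundedOrder L] [Fintype L]

/-- The number of sup-irreducible elements below `x`. -/
private noncomputable def wt (x : L) : ℕ :=
  (Finset.univ.filter (fun j : L => SupIrred j ∧ j ≤ x)).card

private lemma wt_strictMono : StrictMono (wt (L := L)) := by
  intro x y hxy
  obtain ⟨s, hs, hirr⟩ := exists_supIrred_decomposition y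
  have hj : ∃ j ∈ s, ¬ j ≤ x := by
    by_contra h
    push_neg at h
    exact absurd (hs ▸ Finset.sup_le (fun j hj => by simpa using h j hj) : y ≤ x) hxy.not_ge
  obtain ⟨j, hjs, hjx⟩ := hj
  apply Finset.card_lt_card
  constructor
  · intro k hk
    simp only [mem_filter, mem_univ, true_and] at hk ⊢
    exact ⟨hk.1, hk.2.trans hxy.le⟩
  · intro hsub
    have hjy : j ≤ y := hs ▸ (Finset.le_sup hjs (f := id))
    have : j ∈ Finset.univ.filter (fun j : L => SupIrred j ∧ j ≤ y) := by
      simp [hirr hjs, hjy]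
    exact hjx (by simpa using (mem_filter.1 (hsub this)).2.2)

private lemma wt_bot : wt (⊥ : L) = 0 := by
  rw [wt, Finset.card_eq_zero, Finset.filter_eq_empty_iff]
  rintro j -
  rintro ⟨hj, hle⟩
  exact hj.ne_bot (le_bot_iff.1 hle)

private lemma wt_sup_add_wt_inf (x y : L) : wt (x ⊔ y) + wt (x ⊓ y) = wt x + wt y := by
  have h1 : Finset.univ.filter (fun j : L => SupIrred j ∧ j ≤ x ⊔ y)
      = Finset.univ.filter (fun j : L => SupIrred j ∧ j ≤ x)
        ∪ Finset.univ.filter (fun j : L => SupIrred j ∧ j ≤ y) := by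
    ext j
    simp only [mem_filter, mem_union, mem_univ, true_and]
    constructor
    · rintro ⟨hj, hle⟩
      rcases (supPrime_iff_supIrred.2 hj).2 hle with h | h
      exacts [Or.inl ⟨hj, h⟩, Or.inr ⟨hj, h⟩]
    · rintro (⟨hj, h⟩ | ⟨hj, h⟩)
      exacts [⟨hj, h.trans le_sup_left⟩, ⟨hj, h.trans le_sup_right⟩]
  have h2 : Finset.univ.filter (fun j : L => SupIrred j ∧ j ≤ x ⊓ y)
      = Finset.univ.filter (fun j : L => SupIrred j ∧ j ≤ x)
        ∩ Finset.univ.filter (fun j : L => SupIrred j ∧ j ≤ y) := by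
    ext j
    simp only [mem_filter, mem_inter, mem_univ, true_and, le_inf_iff]
    tauto
  simp only [wt]
  rw [h1, h2, Finset.card_union_add_card_inter]

private lemma wt_le_height (x : L) : (wt x : ℕ∞) ≤ Order.height x := by
  generalize hn : wt x = n
  induction n generalizing x with
  | zero => simp
  | succ n ih =>
    have hx : x ≠ ⊥ := by
      rintro rfl
      rw [wt_bot] at hn
      exact Nat.succ_ne_zero n hn.symm
    obtain ⟨y, hy, hymax⟩ :=
      (Finset.univ.filter (fun z : L => z < x)).exists_maximal
        ⟨⊥, by simp [bot_lt_iff_ne_bot.2 hx]⟩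
    simp only [mem_filter, mem_univ, true_and] at hy hymax
    -- the set difference of irreducibles below x and below y has at most one element
    set D := (Finset.univ.filter (fun j : L => SupIrred j ∧ j ≤ x))
        \ (Finset.univ.filter (fun j : L => SupIrred j ∧ j ≤ y)) with hD
    have hDprop : ∀ j ∈ D, SupIrred j ∧ j ≤ x ∧ ¬ j ≤ y := by
      intro j hj
      rw [hD, Finset.mem_sdiff, mem_filter, mem_filter] at hj
      refine ⟨hj.1.2.1, hj.1.2.2, fun hle => hj.2 ?_⟩
      simp [hj.1.2.1, hle]
    have hcover : ∀ j ∈ D, y ⊔ j = x := by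
      intro j hj
      obtain ⟨hjirr, hjx, hjy⟩ := hDprop j hj
      have h1 : y < y ⊔ j := lt_of_le_of_ne le_sup_left (fun h => hjy (h ▸ le_sup_right))
      have h2 : y ⊔ j ≤ x := sup_le hy.le hjx
      rcases lt_or_eq_of_le h2 with h | h
      · exact absurd (hymax h h1.le) h1.not_ge
      · exact h
    have hone : D.card ≤ 1 := by
      rw [Finset.card_le_one]
      intro j₁ hj₁ j₂ hj₂
      obtain ⟨h1irr, h1x, h1y⟩ := hDprop j₁ hj₁
      obtain ⟨h2irr, h2x, h2y⟩ := hDprop j₂ hj₂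
      have e1 : j₁ ≤ j₂ := by
        rcases (supPrime_iff_supIrred.2 h1irr).2 ((hcover j₂ hj₂) ▸ h1x) with h | h
        · exact absurd h h1y
        · exact h
      have e2 : j₂ ≤ j₁ := by
        rcases (supPrime_iff_supIrred.2 h2irr).2 ((hcover j₁ hj₁) ▸ h2x) with h | h
        · exact absurd h h2y
        · exact h
      exact le_antisymm e1 e2
    have hsub : (Finset.univ.filter (fun j : L => SupIrred j ∧ j ≤ x))
        ⊆ (Finset.univ.filter (fun j : L => SupIrred j ∧ j ≤ y)) ∪ D := by
      intro j hj
      rw [Finset.mem_union, Finset.mem_sdiff]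
      by_cases h : j ∈ Finset.univ.filter (fun j : L => SupIrred j ∧ j ≤ y)
      · exact Or.inl h
      · exact Or.inr ⟨hj, h⟩
    have hcard : wt x ≤ wt y + 1 := by
      calc wt x ≤ ((Finset.univ.filter (fun j : L => SupIrred j ∧ j ≤ y)) ∪ D).card :=
            Finset.card_le_card hsub
        _ ≤ wt y + D.card := Finset.card_union_le _ _
        _ ≤ wt y + 1 := by omega
    have hlt : wt y < wt x := wt_strictMono hy
    have hwy : wt y = n := by omega
    have hhy : (n : ℕ∞) ≤ Order.height y := hwy ▸ ih y hwy
    have hfin : Order.height y < ⊤ := by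
      calc Order.height y ≤ Order.height (wt y) :=
            Order.height_le_height_apply_of_strictMono _ wt_strictMono y
        _ = (wt y : ℕ∞) := Order.height_nat _
        _ < ⊤ := WithTop.coe_lt_top _
    have hstep : Order.height y + 1 ≤ Order.height x :=
      (ENat.add_one_le_iff hfin.ne).2 (Order.height_strictMono hy hfin)
    calc ((n + 1 : ℕ) : ℕ∞) = (n : ℕ∞) + 1 := by push_cast; ring
      _ ≤ Order.height y + 1 := by gcongr
      _ ≤ Order.height x := hstep

private lemma height_eq_wt (x : L) : Order.height x = (wt x : ℕ∞) := by
  refine le_antisymm ?_ (wt_le_height x)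
  calc Order.height x ≤ Order.height (wt x) :=
        Order.height_le_height_apply_of_strictMono _ wt_strictMono x
    _ = (wt x : ℕ∞) := Order.height_nat _

end Aux

/-- If `B` is a Boolean sublattice of a finite distributive lattice `L`
spanning `L` (i.e. `⊥ ∈ B` and `⊤ ∈ B`, and every element of `B` has a complement
in `B`), then the length of `L` (the height of `⊤`) equals the sum of the heights
of the atoms of `B`. -/
theorem stmt_7 {L : Type*} [DistribLattice L] [BoundedOrder L] [Fintype L]
    (B : Set L)
    (hBsup : ∀ x ∈ B, ∀ y ∈ B, x ⊔ y ∈ B)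
    (hBinf : ∀ x ∈ B, ∀ y ∈ B, x ⊓ y ∈ B)
    (hbot : ⊥ ∈ B) (htop : ⊤ ∈ B)
    (hcompl : ∀ x ∈ B, ∃ y ∈ B, x ⊔ y = ⊤ ∧ x ⊓ y = ⊥) :
    Order.height (⊤ : L) =
      ∑ x ∈ (Set.toFinite {x : L | x ∈ B ∧ x ≠ ⊥ ∧ ∀ y ∈ B, y < x → y = ⊥}).toFinset,
        Order.height x := by
  classical
  set A := (Set.toFinite {x : L | x ∈ B ∧ x ≠ ⊥ ∧ ∀ y ∈ B, y < x → y = ⊥}).toFinset with hA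
  have hmemA : ∀ a : L, a ∈ A ↔ a ∈ B ∧ a ≠ ⊥ ∧ ∀ y ∈ B, y < a → y = ⊥ := by
    intro a
    rw [hA, Set.Finite.mem_toFinset]
    rfl
  -- distinct atoms meet in ⊥
  have hdisj : ∀ a ∈ A, ∀ b ∈ A, a ≠ b → a ⊓ b = ⊥ := by
    intro a ha b hb hab
    obtain ⟨haB, hane, hamin⟩ := (hmemA a).1 ha
    obtain ⟨hbB, hbne, hbmin⟩ := (hmemA b).1 hb
    have hmem : a ⊓ b ∈ B := hBinf a haB b hbB
    rcases lt_or_eq_of_le (inf_le_left : a ⊓ b ≤ a) with h | h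
    · exact hamin _ hmem h
    · exfalso
      have hle : a ≤ b := h ▸ inf_le_right
      exact hane (hbmin a haB (lt_of_le_of_ne hle hab))
  -- sups of elements of B lie in B
  have hsupB : ∀ s : Finset L, (∀ a ∈ s, a ∈ B) → s.sup id ∈ B := by
    intro s
    induction s using Finset.induction_on with
    | empty => intro _; simpa using hbot
    | insert a s hnot ih =>
      intro hmem
      rw [Finset.sup_insert]
      exact hBsup a (hmem a (Finset.mem_insert_self a s)) _
        (ih fun b hb => hmem b (Finset.mem_insert_of_mem hb))
  -- every nonbot element of B dominates an atom of B
  have hatom_le : ∀ b ∈ B, b ≠ ⊥ → ∃ a ∈ A, a ≤ b := by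
    intro b hbB hbne
    obtain ⟨z, hz, hzmin⟩ :=
      (Finset.univ.filter (fun z : L => z ∈ B ∧ z ≠ ⊥ ∧ z ≤ b)).exists_minimal
        ⟨b, by simp [hbB, hbne]⟩
    simp only [mem_filter, mem_univ, true_and] at hz hzmin
    refine ⟨z, (hmemA z).2 ⟨hz.1, hz.2.1, ?_⟩, hz.2.2⟩
    intro y hyB hyz
    by_contra hy
    exact hyz.not_ge (hzmin ⟨hyB, hy, hyz.le.trans hz.2.2⟩ hyz.le)
  -- the sup of the atoms is ⊤
  have hAsubB : ∀ a ∈ A, a ∈ B := fun a ha => ((hmemA a).1 ha).1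
  have hsupA_mem : A.sup id ∈ B := hsupB A hAsubB
  obtain ⟨c, hcB, hc1, hc2⟩ := hcompl _ hsupA_mem
  have hceq : c = ⊥ := by
    by_contra hc
    obtain ⟨a, haA, hac⟩ := hatom_le c hcB hc
    have hale : a ≤ A.sup id := Finset.le_sup (f := id) haA
    have : a ≤ ⊥ := hc2 ▸ le_inf hale hac
    exact ((hmemA a).1 haA).2.1 (le_bot_iff.1 this)
  have hsup : A.sup id = ⊤ := by
    rw [hceq, sup_bot_eq] at hc1
    exact hc1
  -- the weight of the sup of a subfamily of atoms is the sum of weights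
  have hsum : ∀ s : Finset L, s ⊆ A → wt (s.sup id) = ∑ a ∈ s, wt a := by
    intro s
    induction s using Finset.induction_on with
    | empty => intro _; simp [wt_bot]
    | insert a s hnot ih =>
      intro hsub
      have haA : a ∈ A := hsub (Finset.mem_insert_self a s)
      have hsA : s ⊆ A := fun b hb => hsub (Finset.mem_insert_of_mem hb)
      have hinf : a ⊓ s.sup id = ⊥ := by
        rw [Finset.sup_inf_distrib_left]
        rw [Finset.sup_eq_bot_iff]
        intro b hb
        exact hdisj a haA b (hsA hb) (fun h => hnot (h ▸ hb))
      have hval := wt_sup_add_wt_inf a (s.sup id)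
      rw [hinf, wt_bot, Nat.add_zero] at hval
      rw [Finset.sup_insert, id_eq, hval, ih hsA, Finset.sum_insert hnot]
  have hwt_top : wt (⊤ : L) = ∑ a ∈ A, wt a := by
    rw [← hsup]
    exact hsum A (subset_refl A)
  rw [height_eq_wt, hwt_top, Nat.cast_sum]
  exact Finset.sum_congr rfl fun a _ => (height_eq_wt a).symm
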